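/- Let E be a real inner product space and let p ≥ 2 be real. Then for all a, b ∈ E, ⟨‖a‖^{p-2} a - ‖b‖^{p-2} b, a - b⟩ ≥ 2^{2-p} ‖a - b‖^p. -/

import Mathlib

open Real Set

lemma superadd_aux {x y r : ℝ} (hr : 1 ≤ r) (hy : 0 ≤ y) (hxy : y ≤ x) :
    (x - y) ^ r + y ^ r ≤ x ^ r := by
  have hx : 0 ≤ x := hy.trans hxy
  have h := NNReal.add_rpow_le_rpow_add ((x - y).toNNReal) (y.toNNReal) hr
  rw [← Real.toNNReal_add (sub_nonneg.2 hxy) hy, sub_add_cancel] at h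
  have h2 := (NNReal.coe_le_coe).2 h
  simpa [NNReal.coe_rpow, Real.coe_toNNReal _ (sub_nonneg.2 hxy),
    Real.coe_toNNReal _ hy, Real.coe_toNNReal _ hx] using h2

lemma midpoint_rpow {x y r : ℝ} (hr : 1 ≤ r) (hx : 0 ≤ x) (hy : 0 ≤ y) :
    ((x + y) / 2) ^ r ≤ (x ^ r + y ^ r) / 2 := by
  have h := (convexOn_rpow hr).2 (mem_Ici.2 hx) (mem_Ici.2 hy)
    (by norm_num : (0:ℝ) ≤ (1/2 : ℝ)) (by norm_num : (0:ℝ) ≤ (1/2 : ℝ)) (by norm_num)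
  simp only [smul_eq_mul] at h
  calc ((x + y) / 2) ^ r = (1/2 * x + 1/2 * y) ^ r := by ring_nf
    _ ≤ 1/2 * x ^ r + 1/2 * y ^ r := h
    _ = (x ^ r + y ^ r) / 2 := by ring

lemma L1_aux {p x y : ℝ} (hp : 2 ≤ p) (hx : 0 ≤ x) (hy : 0 ≤ y) :
    (2:ℝ) ^ (2 - p) * (x + y) ^ p ≤ (x ^ (p-1) + y ^ (p-1)) * (x + y) := by
  have hp1 : (1:ℝ) ≤ p - 1 := by linarith
  rcases eq_or_lt_of_le (add_nonneg hx hy) with h0 | hpos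
  · rw [← h0, Real.zero_rpow (by positivity : p ≠ 0)]
    simp
  · have hmid := midpoint_rpow hp1 hx hy
    have hdiv : ((x + y) / 2) ^ (p-1) = (x + y) ^ (p-1) / 2 ^ (p-1) :=
      Real.div_rpow hpos.le (by norm_num : (0:ℝ) ≤ 2) _
    have h2 : (2:ℝ) ^ (2 - p) * 2 ^ (p-1) = 2 := by
      rw [← Real.rpow_add (by norm_num : (0:ℝ) < 2)]; norm_num
    have hpow : (x + y) ^ (p-1) * (x + y) = (x + y) ^ p := by
      rw [← Real.rpow_add_one hpos.ne']; ring_nf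
    have key : (2:ℝ) ^ (2 - p) * (x + y) ^ (p-1) ≤ x ^ (p-1) + y ^ (p-1) := by
      rw [hdiv] at hmid
      have h2p : (0:ℝ) < 2 ^ (p-1) := Real.rpow_pos_of_pos (by norm_num) _
      calc (2:ℝ) ^ (2 - p) * (x + y) ^ (p-1)
          = 2 * ((x + y) ^ (p-1) / 2 ^ (p-1)) := by
            have h3 : (2:ℝ) ^ (2-p) = 2 / 2 ^ (p-1) := by
              rw [eq_div_iff h2p.ne']; exact h2
            rw [h3]; ring
        _ ≤ 2 * ((x ^ (p-1) + y ^ (p-1)) / 2) := by linarith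
        _ = x ^ (p-1) + y ^ (p-1) := by ring
    calc (2:ℝ) ^ (2 - p) * (x + y) ^ p
        = ((2:ℝ) ^ (2 - p) * (x + y) ^ (p-1)) * (x + y) := by rw [← hpow]; ring
      _ ≤ (x ^ (p-1) + y ^ (p-1)) * (x + y) :=
          mul_le_mul_of_nonneg_right key hpos.le

lemma L2_half {p x y : ℝ} (hp : 2 ≤ p) (hy : 0 ≤ y) (hyx : y ≤ x) :
    (2:ℝ) ^ (2 - p) * |x - y| ^ p ≤ (x ^ (p-1) - y ^ (p-1)) * (x - y) := by
  have hp1 : (1:ℝ) ≤ p - 1 := by linarith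
  have hd : 0 ≤ x - y := sub_nonneg.2 hyx
  rw [abs_of_nonneg hd]
  have hsup : (x - y) ^ (p-1) ≤ x ^ (p-1) - y ^ (p-1) := by
    have := superadd_aux hp1 hy hyx
    linarith
  have h1 : (2:ℝ) ^ (2-p) ≤ 1 :=
    Real.rpow_le_one_of_one_le_of_nonpos (by norm_num) (by linarith)
  have hpow : (x - y) ^ p = (x - y) ^ (p-1) * (x - y) := by
    rcases eq_or_lt_of_le hd with h0 | hpos
    · rw [← h0, Real.zero_rpow (by positivity : p ≠ 0),
        Real.zero_rpow (by positivity : p - 1 ≠ 0)]; ring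
    · rw [← Real.rpow_add_one hpos.ne']; ring_nf
  have hdp : 0 ≤ (x - y) ^ p := Real.rpow_nonneg hd p
  calc (2:ℝ) ^ (2 - p) * (x - y) ^ p ≤ 1 * (x - y) ^ p :=
        mul_le_mul_of_nonneg_right h1 hdp
    _ = (x - y) ^ (p-1) * (x - y) := by rw [hpow]; ring
    _ ≤ (x ^ (p-1) - y ^ (p-1)) * (x - y) := mul_le_mul_of_nonneg_right hsup hd

lemma L2_aux {p x y : ℝ} (hp : 2 ≤ p) (hx : 0 ≤ x) (hy : 0 ≤ y) :
    (2:ℝ) ^ (2 - p) * |x - y| ^ p ≤ (x ^ (p-1) - y ^ (p-1)) * (x - y) := by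
  rcases le_total y x with h | h
  · exact L2_half hp hy h
  · have := L2_half hp hx h
    rw [abs_sub_comm] at this
    calc (2:ℝ) ^ (2 - p) * |x - y| ^ p ≤ (y ^ (p-1) - x ^ (p-1)) * (y - x) := this
      _ = (x ^ (p-1) - y ^ (p-1)) * (x - y) := by ring

lemma key_degenerate {p y : ℝ} (hp : 2 ≤ p) (hy : 0 ≤ y) :
    (2:ℝ) ^ (2 - p) * ((0:ℝ) ^ 2 + y ^ 2 - 2 * 0) ^ (p / 2)
      ≤ (0:ℝ) ^ (p-2) * (0:ℝ) ^ 2 + y ^ (p-2) * y ^ 2 - ((0:ℝ) ^ (p-2) + y ^ (p-2)) * 0 := by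
  have h1 : (2:ℝ) ^ (2-p) ≤ 1 :=
    Real.rpow_le_one_of_one_le_of_nonpos (by norm_num) (by linarith)
  have hyp : ((0:ℝ) ^ 2 + y ^ 2 - 2 * 0) ^ (p/2) = y ^ p := by
    rw [show (0:ℝ) ^ 2 + y ^ 2 - 2 * 0 = y ^ 2 by ring, ← Real.rpow_two,
      ← Real.rpow_mul hy]
    ring_nf
  have hysplit : y ^ (p-2) * y ^ 2 = y ^ p := by
    rw [← Real.rpow_two, ← Real.rpow_add_of_nonneg hy (by linarith) (by norm_num)]
    ring_nf
  have hyn : 0 ≤ y ^ p := Real.rpow_nonneg hy _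
  have hz : (0:ℝ) ^ (p-2) * (0:ℝ) ^ 2 + y ^ (p-2) * y ^ 2
      - ((0:ℝ) ^ (p-2) + y ^ (p-2)) * 0 = y ^ p := by
    rw [← hysplit]; ring
  rw [hyp, hz]
  nlinarith

lemma key_scalar {p x y t : ℝ} (hp : 2 ≤ p) (hx : 0 ≤ x) (hy : 0 ≤ y)
    (ht : |t| ≤ x * y) :
    (2:ℝ) ^ (2 - p) * (x ^ 2 + y ^ 2 - 2 * t) ^ (p / 2)
      ≤ x ^ (p-2) * x ^ 2 + y ^ (p-2) * y ^ 2 - (x ^ (p-2) + y ^ (p-2)) * t := by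
  have hp0 : p ≠ 0 := by positivity
  have htle : t ≤ x * y := (le_abs_self t).trans ht
  have htge : -(x * y) ≤ t := neg_le_of_abs_le ht
  rcases eq_or_lt_of_le hx with hx0 | hx0
  · have ht0 : t = 0 := by
      have h2 : |t| ≤ 0 := by nlinarith [abs_nonneg t]
      simpa using le_antisymm h2 (abs_nonneg t)
    subst ht0
    rw [← hx0]
    exact key_degenerate hp hy
  rcases eq_or_lt_of_le hy with hy0 | hy0
  · have ht0 : t = 0 := by
      have h2 : |t| ≤ 0 := by nlinarith [abs_nonneg t]
      simpa using le_antisymm h2 (abs_nonneg t)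
    subst ht0
    rw [← hy0]
    have := key_degenerate hp hx (y := x)
    calc (2:ℝ) ^ (2 - p) * (x ^ 2 + (0:ℝ) ^ 2 - 2 * 0) ^ (p / 2)
        = (2:ℝ) ^ (2 - p) * ((0:ℝ) ^ 2 + x ^ 2 - 2 * 0) ^ (p / 2) := by ring_nf
      _ ≤ (0:ℝ) ^ (p-2) * (0:ℝ) ^ 2 + x ^ (p-2) * x ^ 2
            - ((0:ℝ) ^ (p-2) + x ^ (p-2)) * 0 := this
      _ = x ^ (p-2) * x ^ 2 + (0:ℝ) ^ (p-2) * (0:ℝ) ^ 2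
            - (x ^ (p-2) + (0:ℝ) ^ (p-2)) * 0 := by ring
  -- main case: x, y > 0
  set D := x ^ 2 + y ^ 2 - 2 * t with hD
  set u := (x - y) ^ 2 with hu
  set v := (x + y) ^ 2 with hv
  have hvu : v - u = 4 * (x * y) := by rw [hu, hv]; ring
  have hxy : 0 < x * y := mul_pos hx0 hy0
  have hDu : u ≤ D := by rw [hu, hD]; nlinarith
  have hDv : D ≤ v := by rw [hv, hD]; nlinarith
  set l := (v - D) / (4 * (x * y)) with hl
  set m := (D - u) / (4 * (x * y)) with hm
  have hl0 : 0 ≤ l := div_nonneg (by linarith) (by linarith)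
  have hm0 : 0 ≤ m := div_nonneg (by linarith) (by linarith)
  have hsum : l + m = 1 := by
    rw [hl, hm]
    field_simp
    linarith [hvu]
  have hcomb : l * u + m * v = D := by
    rw [hl, hm]
    field_simp
    nlinarith [hvu]
  have hcv : D ^ (p/2) ≤ l * u ^ (p/2) + m * v ^ (p/2) := by
    have h := (convexOn_rpow (by linarith : (1:ℝ) ≤ p/2)).2
      (mem_Ici.2 (sq_nonneg (x - y))) (mem_Ici.2 (sq_nonneg (x + y))) hl0 hm0 hsum
    simp only [smul_eq_mul] at h
    rw [← hu, ← hv] at h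
    rwa [hcomb] at h
  have hup : u ^ (p/2) = |x - y| ^ p := by
    rw [hu, ← sq_abs, ← Real.rpow_two, ← Real.rpow_mul (abs_nonneg _)]
    ring_nf
  have hvp : v ^ (p/2) = (x + y) ^ p := by
    rw [hv, ← Real.rpow_two, ← Real.rpow_mul (by linarith)]
    ring_nf
  have h2p : (0:ℝ) ≤ (2:ℝ) ^ (2-p) := (Real.rpow_pos_of_pos (by norm_num) _).le
  have hL2 := L2_aux hp hx hy
  have hL1 := L1_aux hp hx hy
  -- rpow splittings
  have hxs : x ^ (p-1) = x ^ (p-2) * x := by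
    rw [← Real.rpow_add_one hx0.ne']; ring_nf
  have hys : y ^ (p-1) = y ^ (p-2) * y := by
    rw [← Real.rpow_add_one hy0.ne']; ring_nf
  have hid : l * ((x ^ (p-2) * x - y ^ (p-2) * y) * (x - y))
      + m * ((x ^ (p-2) * x + y ^ (p-2) * y) * (x + y))
      = x ^ (p-2) * x ^ 2 + y ^ (p-2) * y ^ 2 - (x ^ (p-2) + y ^ (p-2)) * t := by
    rw [hl, hm, hD, hu, hv]
    field_simp
    ring
  calc (2:ℝ) ^ (2 - p) * D ^ (p/2)
      ≤ (2:ℝ) ^ (2 - p) * (l * u ^ (p/2) + m * v ^ (p/2)) :=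
        mul_le_mul_of_nonneg_left hcv h2p
    _ = l * ((2:ℝ) ^ (2 - p) * |x - y| ^ p) + m * ((2:ℝ) ^ (2 - p) * (x + y) ^ p) := by
        rw [hup, hvp]; ring
    _ ≤ l * ((x ^ (p-1) - y ^ (p-1)) * (x - y)) + m * ((x ^ (p-1) + y ^ (p-1)) * (x + y)) := by
        gcongr
    _ = l * ((x ^ (p-2) * x - y ^ (p-2) * y) * (x - y))
        + m * ((x ^ (p-2) * x + y ^ (p-2) * y) * (x + y)) := by rw [hxs, hys]
    _ = _ := hid


/-- Strong monotonicity of the `p`-Laplacian vector field `ξ ↦ ‖ξ‖^{p-2} ξ` for `p ≥ 2`: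
`⟨‖a‖^{p-2} a - ‖b‖^{p-2} b, a - b⟩ ≥ 2^{2-p} ‖a - b‖^p`. -/
theorem pLaplace_strong_monotonicity {E : Type*} [NormedAddCommGroup E]
    [InnerProductSpace ℝ E] (p : ℝ) (hp : 2 ≤ p) (a b : E) :
    (2 : ℝ) ^ (2 - p) * ‖a - b‖ ^ p ≤
      (inner ℝ (‖a‖ ^ (p - 2) • a - ‖b‖ ^ (p - 2) • b) (a - b) : ℝ) := by
  have htb : |(inner ℝ a b : ℝ)| ≤ ‖a‖ * ‖b‖ := abs_real_inner_le_norm a b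
  have hinner : (inner ℝ (‖a‖ ^ (p - 2) • a - ‖b‖ ^ (p - 2) • b) (a - b) : ℝ)
      = ‖a‖ ^ (p-2) * ‖a‖ ^ 2 + ‖b‖ ^ (p-2) * ‖b‖ ^ 2
        - (‖a‖ ^ (p-2) + ‖b‖ ^ (p-2)) * (inner ℝ a b : ℝ) := by
    simp only [inner_sub_left, inner_sub_right, real_inner_smul_left,
      real_inner_self_eq_norm_sq]
    rw [real_inner_comm b a]
    ring
  have hnorm : ‖a - b‖ ^ p
      = (‖a‖ ^ 2 + ‖b‖ ^ 2 - 2 * (inner ℝ a b : ℝ)) ^ (p / 2) := by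
    have h : ‖a‖ ^ 2 + ‖b‖ ^ 2 - 2 * (inner ℝ a b : ℝ) = ‖a - b‖ ^ 2 := by
      rw [norm_sub_sq_real]; ring
    rw [h, ← Real.rpow_two, ← Real.rpow_mul (norm_nonneg _)]
    ring_nf
  rw [hinner, hnorm]
  exact key_scalar hp (norm_nonneg a) (norm_nonneg b) htb
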